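/- Let m = 2p ≥ 2 be an even integer and let Ŵ⁺ be the group with presentation ⟨z, s₀, s₁, s_m | z² = s₀² = s₁² = s_m² = 1, (s₀s₁)² = (s₀s_m)² = (s₁s_m)^m = z, z s_i = s_i z for i ∈ {0,1,m}⟩. Then Ŵ⁺ has exactly 2m + 6 conjugacy classes. -/

import Mathlib

/-- Generators of the double covering of `W = ℤ₂ × D_{2m}`: the central element `z`
and the lifted reflections `s₀`, `s₁`, `s_m`. -/
inductive Gen : Type
  | z | s0 | s1 | sm
deriving DecidableEq

open FreeGroup

/-- Relators of the positive double covering `Ŵ⁺` of `ℤ₂ × D_{2m}` for even `m`: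
`z² = s₀² = s₁² = s_m² = 1`, `(s₀s₁)² = (s₀s_m)² = (s₁s_m)^m = z`,
and `z` commutes with the generators. -/
def relsEvenPos (m : ℕ) : Set (FreeGroup Gen) :=
  { (of Gen.z) ^ 2, (of Gen.s0) ^ 2, (of Gen.s1) ^ 2, (of Gen.sm) ^ 2,
    (of Gen.s0 * of Gen.s1) ^ 2 * (of Gen.z)⁻¹,
    (of Gen.s0 * of Gen.sm) ^ 2 * (of Gen.z)⁻¹,
    (of Gen.s1 * of Gen.sm) ^ m * (of Gen.z)⁻¹,
    of Gen.z * of Gen.s0 * (of Gen.z)⁻¹ * (of Gen.s0)⁻¹,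
    of Gen.z * of Gen.s1 * (of Gen.z)⁻¹ * (of Gen.s1)⁻¹,
    of Gen.z * of Gen.sm * (of Gen.z)⁻¹ * (of Gen.sm)⁻¹ }

namespace WposAux

lemma z2cases (t : ZMod 2) : t = 0 ∨ t = 1 := by revert t; decide

lemma z2add (t : ZMod 2) : t + t = 0 := by revert t; decide

variable (p : ℕ)

/-- the element `2p·y` of `ZMod (4p)` for `y : ZMod 2`. -/
def mu (y : ZMod 2) : ZMod (4*p) := ((2*p*y.val : ℕ) : ZMod (4*p))

lemma mu_add (y y' : ZMod 2) : mu p (y+y') = mu p y + mu p y' := by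
  unfold mu
  have v1 : (1 : ZMod 2).val = 1 := rfl
  rcases z2cases y with rfl | rfl <;> rcases z2cases y' with rfl | rfl
  · simp
  · simp
  · simp
  · rw [show (1+1 : ZMod 2) = 0 from by decide]
    show ((2*p*(0:ZMod 2).val : ℕ) : ZMod (4*p)) = ((2*p*(1:ZMod 2).val : ℕ) : ZMod (4*p)) + _
    rw [ZMod.val_zero, v1, ← Nat.cast_add, show 2*p*1+2*p*1 = 4*p by ring, ZMod.natCast_self]
    simp

lemma mu_zero : mu p 0 = 0 := by simp [mu]

lemma mu_one : mu p 1 = ((2*p : ℕ) : ZMod (4*p)) := by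
  show ((2*p*(1:ZMod 2).val : ℕ) : ZMod (4*p)) = _
  norm_num [show (1 : ZMod 2).val = 1 from rfl]

abbrev N := ZMod (4*p) × ZMod 2

/-- the order-2 automorphism `(x,y) ↦ (2p·y - x, y)` of `N`. -/
def sig (n : N p) : N p := (mu p n.2 - n.1, n.2)

lemma sig_add (a b : N p) : sig p (a+b) = sig p a + sig p b := by
  simp only [sig, Prod.fst_add, Prod.snd_add, mu_add, Prod.mk_add_mk]
  rw [Prod.mk.injEq]; exact ⟨by ring, rfl⟩

lemma sig_sig (a : N p) : sig p (sig p a) = a := by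
  simp [sig]

lemma sig_zero : sig p 0 = 0 := by simp [sig, mu_zero]

lemma sig_neg (a : N p) : sig p (-a) = - sig p a := by
  have := sig_add p a (-a)
  simp only [add_neg_cancel, sig_zero] at this
  linear_combination (norm := module) -this

/-- `act t` is `sig` if `t = 1`, identity otherwise. -/
def act (t : ZMod 2) (n : N p) : N p := if t = 0 then n else sig p n

lemma act_add (t : ZMod 2) (a b : N p) : act p t (a+b) = act p t a + act p t b := by
  unfold act; split <;> simp [sig_add]

lemma act_act (t t' : ZMod 2) (a : N p) : act p t (act p t' a) = act p (t+t') a := by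
  unfold act
  rcases z2cases t with rfl | rfl <;> rcases z2cases t' with rfl | rfl <;> simp [sig_sig, show (1+1:ZMod 2) = 0 from by decide]

lemma act_zero (a : N p) : act p 0 a = a := by simp [act]

lemma act_one (a : N p) : act p 1 a = sig p a := by simp [act]

lemma act_zero_elem (t : ZMod 2) : act p t 0 = 0 := by
  unfold act; split <;> simp [sig_zero]

lemma act_neg (t : ZMod 2) (a : N p) : act p t (-a) = - act p t a := by
  unfold act; split <;> simp [sig_neg]

/-- The concrete model of the positive double cover: `(ZMod (4p) × ZMod 2) ⋊ ZMod 2`. -/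
@[ext] structure Gg (p : ℕ) where
  n : ZMod (4*p) × ZMod 2
  t : ZMod 2

namespace Gg

instance : Mul (Gg p) := ⟨fun g h => ⟨g.n + act p g.t h.n, g.t + h.t⟩⟩
instance : One (Gg p) := ⟨⟨0, 0⟩⟩
instance : Inv (Gg p) := ⟨fun g => ⟨act p g.t (-g.n), g.t⟩⟩

variable {p} in
lemma mul_def (g h : Gg p) : g * h = ⟨g.n + act p g.t h.n, g.t + h.t⟩ := rfl
lemma one_def : (1 : Gg p) = ⟨0, 0⟩ := rfl
variable {p} in
lemma inv_def (g : Gg p) : g⁻¹ = ⟨act p g.t (-g.n), g.t⟩ := rfl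

instance : Group (Gg p) where
  mul_assoc a b c := by
    simp only [mul_def, act_add, act_act]
    ext : 1
    · dsimp; rw [add_assoc]
    · dsimp; rw [add_assoc]
  one_mul a := by simp [mul_def, one_def, act_zero]
  mul_one a := by simp [mul_def, one_def, act_zero_elem]
  inv_mul_cancel a := by
    ext : 1
    · show act p a.t (-a.n) + act p a.t a.n = 0
      rw [← act_add, neg_add_cancel, act_zero_elem]
    · exact z2add a.t

lemma conj_eq (u g : Gg p) :
    u * g * u⁻¹ = ⟨u.n - act p g.t u.n + act p u.t g.n, g.t⟩ := by
  ext : 1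
  · show u.n + act p u.t g.n + act p (u.t + g.t) (act p u.t (-u.n)) = _
    rw [act_act, act_neg, show u.t + g.t + u.t = g.t by
      rcases z2cases u.t with h | h <;> rcases z2cases g.t with h' | h' <;>
        rw [h, h'] <;> decide]
    abel
  · show u.t + g.t + u.t = g.t
    rcases z2cases u.t with h | h <;> rcases z2cases g.t with h' | h' <;>
      rw [h, h'] <;> decide

lemma isConj_t {g h : Gg p} (hc : IsConj g h) : g.t = h.t := by
  rw [isConj_iff] at hc
  obtain ⟨u, rfl⟩ := hc
  rw [conj_eq]

lemma isConj_t0_iff (n n' : N p) :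
    IsConj (⟨n, 0⟩ : Gg p) ⟨n', 0⟩ ↔ n' = n ∨ n' = sig p n := by
  constructor
  · rw [isConj_iff]
    rintro ⟨u, hu⟩
    rw [conj_eq] at hu
    have := congrArg Gg.n hu
    dsimp at this
    rw [act_zero] at this
    rcases z2cases u.t with h | h <;> rw [h] at this
    · left; rw [← this, act_zero]; abel
    · right; rw [← this, act_one]; abel
  · rintro (rfl | rfl)
    · exact IsConj.refl _
    · rw [isConj_iff]
      refine ⟨⟨0, 1⟩, ?_⟩
      rw [conj_eq]
      ext : 1 <;> simp [act_zero, act_one]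

/-- parity homomorphism `ZMod (4p) → ZMod 2`. -/
def par : ZMod (4*p) →+* ZMod 2 := ZMod.castHom (show (2:ℕ) ∣ 4*p from ⟨2*p, by ring⟩) (ZMod 2)

lemma par_natCast (k : ℕ) : par p ((k : ℕ) : ZMod (4*p)) = (k : ZMod 2) := by
  simp [par]

lemma par_even (d : ZMod (4*p)) (h : par p d = 0) [NeZero p] : ∃ a, d = 2*a := by
  haveI : NeZero (4*p) := ⟨by have := NeZero.pos p; omega⟩
  have hv : ((d.val : ℕ) : ZMod (4*p)) = d := ZMod.natCast_zmod_val d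
  rw [← hv, par_natCast] at h
  rw [ZMod.natCast_eq_zero_iff] at h
  obtain ⟨k, hk⟩ := h
  exact ⟨(k : ZMod (4*p)), by rw [← hv, hk]; push_cast; ring⟩

lemma par_mu (y : ZMod 2) : par p (mu p y) = 0 := by
  rw [mu, par_natCast]
  rw [show ((2*p*y.val : ℕ) : ZMod 2) = ((2:ℕ):ZMod 2) * ((p*y.val : ℕ) : ZMod 2) by
    push_cast; ring]
  rw [show ((2:ℕ):ZMod 2) = 0 from by decide, zero_mul]

lemma sub_sig (a : ZMod (4*p)) (b : ZMod 2) :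
    ((a,b) : N p) - sig p (a,b) = (2*a - mu p b, 0) := by
  rw [sig, Prod.mk_sub_mk, Prod.mk.injEq]
  exact ⟨by ring, by ring⟩

lemma par_two : par p (2 : ZMod (4*p)) = 0 := by
  rw [show (2 : ZMod (4*p)) = ((2:ℕ) : ZMod (4*p)) by norm_cast, par_natCast]
  decide

lemma z2neg (w : ZMod 2) : -w = w := by revert w; decide

lemma isConj_t1_iff [NeZero p] (x x' : ZMod (4*p)) (y y' : ZMod 2) :
    IsConj (⟨(x, y), 1⟩ : Gg p) ⟨(x', y'), 1⟩ ↔ y' = y ∧ par p x' = par p x := by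
  constructor
  · rw [isConj_iff]
    rintro ⟨⟨⟨a, b⟩, s⟩, hu⟩
    rw [conj_eq] at hu
    have hn := congrArg Gg.n hu
    dsimp at hn
    rw [act_one, sub_sig] at hn
    rcases z2cases s with rfl | rfl
    · rw [act_zero] at hn
      rw [show ((2*a - mu p b, 0) : N p) + (x, y) = (2*a - mu p b + x, 0 + y) from rfl,
        Prod.mk.injEq] at hn
      obtain ⟨h1, h2⟩ := hn
      refine ⟨by rw [← h2]; ring, ?_⟩
      rw [← h1, _root_.map_add, _root_.map_sub, _root_.map_mul, par_mu, par_two, zero_mul]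
      ring
    · rw [act_one] at hn
      rw [show (sig p (x, y) : N p) = (mu p y - x, y) from rfl] at hn
      rw [show ((2*a - mu p b, 0) : N p) + (mu p y - x, y) =
        (2*a - mu p b + (mu p y - x), 0 + y) from rfl, Prod.mk.injEq] at hn
      obtain ⟨h1, h2⟩ := hn
      refine ⟨by rw [← h2]; ring, ?_⟩
      rw [← h1, _root_.map_add, _root_.map_sub, _root_.map_mul, _root_.map_sub, par_mu, par_mu, par_two, zero_mul]
      rw [show ((0:ZMod 2) - 0 + (0 - par p x)) = -(par p x) by ring, z2neg]
  · rintro ⟨rfl, hpar⟩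
    have h0 : par p (x' - x) = 0 := by rw [_root_.map_sub, hpar, sub_self]
    obtain ⟨a, ha⟩ := par_even p _ h0
    rw [isConj_iff]
    refine ⟨⟨(a, 0), 0⟩, ?_⟩
    rw [conj_eq]
    ext : 1
    · show ((a,0) : N p) - act p 1 (a,0) + act p 0 (x,y') = (x', y')
      rw [act_one, act_zero]
      rw [Prod.mk.injEq]
      constructor
      · show a - (mu p 0 - a) + x = x'
        rw [mu_zero]
        have : x' = x + 2*a := by rw [← ha]; ring
        rw [this]; ring
      · show (0 : ZMod 2) - 0 + y' = y'; ring
    · rfl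

lemma sig_y0 (c : ZMod (4*p)) : sig p (c, 0) = (-c, 0) := by
  rw [sig]; dsimp; rw [mu_zero, zero_sub]

lemma sig_y1 (c : ZMod (4*p)) : sig p (c, 1) = (((2*p:ℕ) : ZMod (4*p)) - c, 1) := by
  rw [sig]; dsimp; rw [mu_one]

/-- representatives of the conjugacy classes -/
def rep (i : ℕ) : Gg p :=
  if i < 2*p+1 then ⟨((i : ZMod (4*p)), 0), 0⟩
  else if i < 4*p+2 then
    ⟨(((if i - (2*p+1) ≤ p then i - (2*p+1) else i - (2*p+1) + p : ℕ) : ZMod (4*p)), 1), 0⟩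
  else ⟨((((i - (4*p+2)) % 2 : ℕ) : ZMod (4*p)), (((i - (4*p+2)) / 2 : ℕ) : ZMod 2)), 1⟩

lemma rep_eq1 {i : ℕ} (h : i < 2*p+1) :
    rep p i = ⟨((i : ZMod (4*p)), 0), 0⟩ := by rw [rep, if_pos h]

lemma rep_eq2 {i : ℕ} (h1 : ¬ i < 2*p+1) (h2 : i < 4*p+2) :
    rep p i = ⟨(((if i - (2*p+1) ≤ p then i - (2*p+1) else i - (2*p+1) + p : ℕ) :
      ZMod (4*p)), 1), 0⟩ := by rw [rep, if_neg h1, if_pos h2]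

lemma rep_eq3 {i : ℕ} (h1 : ¬ i < 2*p+1) (h2 : ¬ i < 4*p+2) :
    rep p i = ⟨((((i - (4*p+2)) % 2 : ℕ) : ZMod (4*p)),
      (((i - (4*p+2)) / 2 : ℕ) : ZMod 2)), 1⟩ := by rw [rep, if_neg h1, if_neg h2]

lemma cast_eq_cases [NeZero (4*p)] {a b : ℕ} (h : (a : ZMod (4*p)) = (b : ZMod (4*p)))
    (hb : b < 4*p) (ha : a < 8*p) : a = b ∨ a = b + 4*p := by
  have hv := congrArg ZMod.val h
  rw [ZMod.val_natCast, ZMod.val_natCast, Nat.mod_eq_of_lt hb] at hv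
  have hd := Nat.div_add_mod a (4*p)
  rw [hv] at hd
  have hq : a / (4*p) ≤ 1 := by
    by_contra hq
    push_neg at hq
    have : 4*p*2 ≤ 4*p*(a/(4*p)) := Nat.mul_le_mul_left _ hq
    omega
  rcases Nat.le_one_iff_eq_zero_or_eq_one.mp hq with h0 | h0 <;> rw [h0] at hd <;> omega

lemma castZMod2_inj {a b : ℕ} (h : (a : ZMod 2) = (b : ZMod 2)) : a % 2 = b % 2 := by
  have hv := congrArg ZMod.val h
  rwa [ZMod.val_natCast, ZMod.val_natCast] at hv

lemma rep_inj [NeZero p] {i i' : ℕ} (hi : i < 4*p+6) (hi' : i' < 4*p+6)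
    (h : IsConj (rep p i) (rep p i')) : i = i' := by
  have hp : 1 ≤ p := NeZero.pos p
  haveI : NeZero (4*p) := ⟨by omega⟩
  rcases lt_or_ge i (2*p+1) with h1 | h1 <;> rcases lt_or_ge i' (2*p+1) with h1' | h1'
  · -- region 1 / region 1
    rw [rep_eq1 p h1, rep_eq1 p h1'] at h
    rcases (isConj_t0_iff p _ _).mp h with he | he
    · have := congrArg Prod.fst he
      dsimp at this
      rcases cast_eq_cases p this (by omega) (by omega) with h2 | h2 <;> omega
    · rw [sig_y0] at he
      have hf := congrArg Prod.fst he
      dsimp at hf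
      have : ((i' + i : ℕ) : ZMod (4*p)) = ((0 : ℕ) : ZMod (4*p)) := by
        push_cast
        rw [hf]; ring
      rcases cast_eq_cases p this (by omega) (by omega) with h2 | h2 <;> omega
  · -- region 1 / region 2 or 3
    rcases lt_or_ge i' (4*p+2) with h2' | h2'
    · rw [rep_eq1 p h1, rep_eq2 p (by omega) h2'] at h
      rcases (isConj_t0_iff p _ _).mp h with he | he
      · exact absurd (show (1 : ZMod 2) = 0 from congrArg Prod.snd he) (by decide)
      · rw [sig_y0] at he
        exact absurd (show (1 : ZMod 2) = 0 from congrArg Prod.snd he) (by decide)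
    · rw [rep_eq1 p h1, rep_eq3 p (by omega) (by omega)] at h
      exact absurd (show (0 : ZMod 2) = 1 from isConj_t p h) (by decide)
  · -- region 2 or 3 / region 1
    rcases lt_or_ge i (4*p+2) with h2 | h2
    · rw [rep_eq2 p (by omega) h2, rep_eq1 p h1'] at h
      rcases (isConj_t0_iff p _ _).mp h with he | he
      · exact absurd (show (0 : ZMod 2) = 1 from congrArg Prod.snd he) (by decide)
      · rw [sig_y1] at he
        exact absurd (show (0 : ZMod 2) = 1 from congrArg Prod.snd he) (by decide)
    · rw [rep_eq3 p (by omega) (by omega), rep_eq1 p h1'] at h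
      exact absurd (show (1 : ZMod 2) = 0 from isConj_t p h) (by decide)
  · -- both in region 2 or 3
    rcases lt_or_ge i (4*p+2) with h2 | h2 <;> rcases lt_or_ge i' (4*p+2) with h2' | h2'
    · -- region 2 / region 2
      rw [rep_eq2 p (by omega) h2, rep_eq2 p (by omega) h2'] at h
      set w := if i - (2*p+1) ≤ p then i - (2*p+1) else i - (2*p+1) + p with hw
      set w' := if i' - (2*p+1) ≤ p then i' - (2*p+1) else i' - (2*p+1) + p with hw'
      have hwb : w ≤ 3*p ∧ (w ≤ p ∨ (2*p+1 ≤ w ∧ i - (2*p+1) = w - p)) ∧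
          (w ≤ p → i - (2*p+1) = w) := by
        rw [hw]; split <;> omega
      have hwb' : w' ≤ 3*p ∧ (w' ≤ p ∨ (2*p+1 ≤ w' ∧ i' - (2*p+1) = w' - p)) ∧
          (w' ≤ p → i' - (2*p+1) = w') := by
        rw [hw']; split <;> omega
      rcases (isConj_t0_iff p _ _).mp h with he | he
      · have := congrArg Prod.fst he
        dsimp at this
        rcases cast_eq_cases p this (by omega) (by omega) with h3 | h3 <;> omega
      · rw [sig_y1] at he
        have hf := congrArg Prod.fst he
        dsimp at hf
        have : ((w' + w : ℕ) : ZMod (4*p)) = ((2*p : ℕ) : ZMod (4*p)) := by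
          push_cast
          rw [hf]; push_cast; ring
        rcases cast_eq_cases p this (by omega) (by omega) with h3 | h3 <;> omega
    · rw [rep_eq2 p (by omega) h2, rep_eq3 p (by omega) (by omega)] at h
      exact absurd (show (0 : ZMod 2) = 1 from isConj_t p h) (by decide)
    · rw [rep_eq3 p (by omega) (by omega), rep_eq2 p (by omega) h2'] at h
      exact absurd (show (1 : ZMod 2) = 0 from isConj_t p h) (by decide)
    · -- region 3 / region 3
      rw [rep_eq3 p (by omega) (by omega), rep_eq3 p (by omega) (by omega)] at h
      obtain ⟨hy, hx⟩ := (isConj_t1_iff p _ _ _ _).mp h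
      rw [par_natCast, par_natCast] at hx
      have hx2 := castZMod2_inj hx
      have hy2 := castZMod2_inj hy
      have ki : i - (4*p+2) < 4 := by omega
      have ki' : i' - (4*p+2) < 4 := by omega
      omega

lemma rep_surj [NeZero p] (g : Gg p) : ∃ i, i < 4*p+6 ∧ IsConj (rep p i) g := by
  have hp : 1 ≤ p := NeZero.pos p
  haveI : NeZero (4*p) := ⟨by omega⟩
  obtain ⟨⟨x, y⟩, t⟩ := g
  have hv : x.val < 4*p := ZMod.val_lt x
  have hx : ((x.val : ℕ) : ZMod (4*p)) = x := ZMod.natCast_zmod_val x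
  rcases z2cases t with rfl | rfl
  · rcases z2cases y with rfl | rfl
    · -- t = 0, y = 0 : class {x, -x}
      rcases le_or_gt x.val (2*p) with hv2 | hv2
      · refine ⟨x.val, by omega, ?_⟩
        rw [rep_eq1 p (by omega)]
        rw [isConj_t0_iff]
        left
        rw [hx]
      · refine ⟨4*p - x.val, by omega, ?_⟩
        rw [rep_eq1 p (by omega)]
        rw [isConj_t0_iff, sig_y0]
        right
        rw [Prod.mk.injEq]
        refine ⟨?_, rfl⟩
        rw [Nat.cast_sub (by omega), ZMod.natCast_self, hx]
        ring
    · -- t = 0, y = 1 : class {x, 2p - x}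
      have key : ∃ w, (w ≤ p ∨ (2*p+1 ≤ w ∧ w ≤ 3*p)) ∧
          ((w : ZMod (4*p)) = x ∨ (w : ZMod (4*p)) = ((2*p:ℕ) : ZMod (4*p)) - x) := by
        rcases le_or_gt x.val p with hc | hc
        · exact ⟨x.val, Or.inl hc, Or.inl hx⟩
        rcases le_or_gt x.val (2*p) with hc2 | hc2
        · refine ⟨2*p - x.val, Or.inl (by omega), Or.inr ?_⟩
          rw [Nat.cast_sub (by omega), hx]
        rcases le_or_gt x.val (3*p) with hc3 | hc3
        · exact ⟨x.val, Or.inr (by omega), Or.inl hx⟩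
        · refine ⟨6*p - x.val, Or.inr (by omega), Or.inr ?_⟩
          rw [Nat.cast_sub (by omega), hx,
            congrArg (fun n : ℕ => (n : ZMod (4*p))) (show 6*p = 2*p+4*p from by omega)]
          rw [Nat.cast_add, ZMod.natCast_self, add_zero]
      obtain ⟨w, hwr, hweq⟩ := key
      obtain ⟨j, hj, hjw⟩ : ∃ j, j ≤ 2*p ∧ (if j ≤ p then j else j + p) = w := by
        rcases hwr with hc | hc
        · exact ⟨w, by omega, if_pos hc⟩
        · exact ⟨w - p, by omega, by rw [if_neg (by omega)]; omega⟩
      refine ⟨2*p+1 + j, by omega, ?_⟩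
      rw [rep_eq2 p (by omega) (by omega), Nat.add_sub_cancel_left, hjw,
        isConj_t0_iff, sig_y1]
      rcases hweq with he | he
      · left; rw [he]
      · right
        rw [Prod.mk.injEq]
        exact ⟨by rw [he]; ring, rfl⟩
  · -- t = 1
    have hyv : y.val < 2 := ZMod.val_lt y
    refine ⟨4*p+2 + (x.val % 2 + 2 * y.val), by omega, ?_⟩
    rw [rep_eq3 p (by omega) (by omega), Nat.add_sub_cancel_left]
    rw [show (x.val % 2 + 2 * y.val) % 2 = x.val % 2 by omega,
      show (x.val % 2 + 2 * y.val) / 2 = y.val by omega]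
    rw [isConj_t1_iff]
    constructor
    · exact (ZMod.natCast_zmod_val y).symm
    · conv_lhs => rw [← hx]
      rw [par_natCast, par_natCast, ZMod.natCast_mod]

theorem card_conjClasses [NeZero p] :
    Nat.card (ConjClasses (Gg p)) = 4*p+6 := by
  have hb : Function.Bijective
      (fun i : Fin (4*p+6) => ConjClasses.mk (rep p i.val)) := by
    constructor
    · intro i i' hii
      rw [ConjClasses.mk_eq_mk_iff_isConj] at hii
      exact Fin.ext (rep_inj p i.isLt i'.isLt hii)
    · intro q
      obtain ⟨g, rfl⟩ := ConjClasses.exists_rep q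
      obtain ⟨i, hi, hc⟩ := rep_surj p g
      exact ⟨⟨i, hi⟩, ConjClasses.mk_eq_mk_iff_isConj.mpr hc⟩
  have := Nat.card_eq_of_bijective _ hb
  simpa using this.symm

lemma pow_t0 (n : N p) (k : ℕ) : (⟨n, 0⟩ : Gg p)^k = ⟨k • n, 0⟩ := by
  induction k with
  | zero => rw [pow_zero, zero_smul]; rfl
  | succ k ih =>
    rw [pow_succ, ih, mul_def]
    ext : 1
    · show k • n + act p 0 n = (k+1) • n
      rw [act_zero, succ_nsmul]
    · show (0 : ZMod 2) + 0 = 0; ring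

lemma pow_c (s : ZMod 2) (k : ℕ) : (⟨0, s⟩ : Gg p)^k = ⟨0, k • s⟩ := by
  induction k with
  | zero => rw [pow_zero, zero_smul]; rfl
  | succ k ih =>
    rw [pow_succ, ih, mul_def]
    ext : 1
    · show (0 : N p) + act p (k • s) 0 = 0
      rw [act_zero_elem, add_zero]
    · show k • s + s = (k+1) • s
      rw [succ_nsmul]

lemma two_c : (((2*p : ℕ)) : ZMod (4*p)) + ((2*p : ℕ) : ZMod (4*p)) = 0 := by
  rw [← Nat.cast_add, show 2*p+2*p = 4*p from by ring, ZMod.natCast_self]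

lemma neg_c : -(((2*p : ℕ)) : ZMod (4*p)) = ((2*p : ℕ) : ZMod (4*p)) :=
  neg_eq_of_add_eq_zero_left (two_c p)

end Gg

/-- images of the generators in the concrete group -/
def genMap : Gen → Gg p
  | Gen.z => ⟨(((2*p : ℕ) : ZMod (4*p)), 0), 0⟩
  | Gen.s0 => ⟨(0, 1), 0⟩
  | Gen.s1 => ⟨(0, 0), 1⟩
  | Gen.sm => ⟨(1, 0), 1⟩

lemma mk_mul (n n' : N p) (t t' : ZMod 2) :
    (⟨n, t⟩ : Gg p) * ⟨n', t'⟩ = ⟨n + act p t n', t + t'⟩ := rfl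

lemma one_eq : (1 : Gg p) = ⟨((0 : ZMod (4*p)), (0 : ZMod 2)), 0⟩ := rfl

open Gg in
open scoped commutatorElement in
lemma lift_rels : ∀ r ∈ relsEvenPos (2*p), FreeGroup.lift (genMap p) r = 1 := by
  have hz : genMap p Gen.z = ⟨(((2*p : ℕ) : ZMod (4*p)), 0), 0⟩ := rfl
  have h0 : genMap p Gen.s0 = ⟨(0, 1), 0⟩ := rfl
  have h1 : genMap p Gen.s1 = ⟨(0, 0), 1⟩ := rfl
  have hm : genMap p Gen.sm = ⟨(1, 0), 1⟩ := rfl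
  have act1 : ∀ a : ZMod (4*p), ∀ b : ZMod 2, act p 1 (a, b) = (mu p b - a, b) := by
    intro a b; rw [act_one]; rfl
  have e5 : (⟨(0,1),0⟩ : Gg p) * ⟨(0,0),1⟩ = ⟨(0,1),1⟩ := by
    rw [mk_mul, act_zero, Gg.mk.injEq, Prod.mk_add_mk, Prod.mk.injEq]
    refine ⟨⟨by ring, by decide⟩, by decide⟩
  have e5' : (⟨(0,1),1⟩ : Gg p) * ⟨(0,1),1⟩ = ⟨(((2*p : ℕ) : ZMod (4*p)), 0), 0⟩ := by
    rw [mk_mul, act1, mu_one, Gg.mk.injEq, Prod.mk_add_mk, Prod.mk.injEq]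
    refine ⟨⟨by ring, by decide⟩, by decide⟩
  have e6 : (⟨(0,1),0⟩ : Gg p) * ⟨(1,0),1⟩ = ⟨(1,1),1⟩ := by
    rw [mk_mul, act_zero, Gg.mk.injEq, Prod.mk_add_mk, Prod.mk.injEq]
    refine ⟨⟨by ring, by decide⟩, by decide⟩
  have e6' : (⟨(1,1),1⟩ : Gg p) * ⟨(1,1),1⟩ = ⟨(((2*p : ℕ) : ZMod (4*p)), 0), 0⟩ := by
    rw [mk_mul, act1, mu_one, Gg.mk.injEq, Prod.mk_add_mk, Prod.mk.injEq]
    refine ⟨⟨by ring, by decide⟩, by decide⟩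
  have e7 : (⟨(0,0),1⟩ : Gg p) * ⟨(1,0),1⟩ = ⟨(-1,0),0⟩ := by
    rw [mk_mul, act1, mu_zero, Gg.mk.injEq, Prod.mk_add_mk, Prod.mk.injEq]
    refine ⟨⟨by ring, by decide⟩, by decide⟩
  have e7' : (⟨(-1,0),0⟩ : Gg p) ^ (2*p) = ⟨(((2*p : ℕ) : ZMod (4*p)), 0), 0⟩ := by
    rw [pow_t0, Gg.mk.injEq, Prod.smul_mk, Prod.mk.injEq]
    refine ⟨⟨?_, by rw [smul_zero]⟩, rfl⟩
    rw [nsmul_eq_mul, mul_neg_one, neg_c]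
  intro r hr
  simp only [relsEvenPos, Set.mem_insert_iff, Set.mem_singleton_iff] at hr
  rcases hr with rfl|rfl|rfl|rfl|rfl|rfl|rfl|rfl|rfl|rfl <;>
    simp only [_root_.map_mul, _root_.map_pow, _root_.map_inv, FreeGroup.lift_apply_of,
      hz, h0, h1, hm]
  · rw [pow_two, mk_mul, act_zero, one_eq, Gg.mk.injEq, Prod.mk_add_mk, Prod.mk.injEq]
    refine ⟨⟨two_c p, by decide⟩, by decide⟩
  · rw [pow_two, mk_mul, act_zero, one_eq, Gg.mk.injEq, Prod.mk_add_mk, Prod.mk.injEq]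
    refine ⟨⟨by ring, by decide⟩, by decide⟩
  · rw [pow_two, mk_mul, act1, mu_zero, one_eq, Gg.mk.injEq, Prod.mk_add_mk, Prod.mk.injEq]
    refine ⟨⟨by ring, by decide⟩, by decide⟩
  · rw [pow_two, mk_mul, act1, mu_zero, one_eq, Gg.mk.injEq, Prod.mk_add_mk, Prod.mk.injEq]
    refine ⟨⟨by ring, by decide⟩, by decide⟩
  · rw [pow_two, e5, e5', mul_inv_cancel]
  · rw [pow_two, e6, e6', mul_inv_cancel]
  · rw [e7, e7', mul_inv_cancel]
  · show ⁅(⟨(((2*p : ℕ) : ZMod (4*p)), 0), 0⟩ : Gg p), (⟨(0,1),0⟩ : Gg p)⁆ = 1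
    rw [commutatorElement_eq_one_iff_commute]
    show _ * _ = _ * _
    rw [mk_mul, mk_mul, act_zero, act_zero, Gg.mk.injEq, Prod.mk_add_mk, Prod.mk_add_mk,
      Prod.mk.injEq]
    refine ⟨⟨by ring, by decide⟩, by decide⟩
  · show ⁅(⟨(((2*p : ℕ) : ZMod (4*p)), 0), 0⟩ : Gg p), (⟨(0,0),1⟩ : Gg p)⁆ = 1
    rw [commutatorElement_eq_one_iff_commute]
    show _ * _ = _ * _
    rw [mk_mul, mk_mul, act_zero, act1, mu_zero, Gg.mk.injEq, Prod.mk_add_mk, Prod.mk_add_mk,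
      Prod.mk.injEq]
    refine ⟨⟨by rw [zero_sub, neg_c]; ring, by decide⟩, by decide⟩
  · show ⁅(⟨(((2*p : ℕ) : ZMod (4*p)), 0), 0⟩ : Gg p), (⟨(1,0),1⟩ : Gg p)⁆ = 1
    rw [commutatorElement_eq_one_iff_commute]
    show _ * _ = _ * _
    rw [mk_mul, mk_mul, act_zero, act1, mu_zero, Gg.mk.injEq, Prod.mk_add_mk, Prod.mk_add_mk,
      Prod.mk.injEq]
    refine ⟨⟨by rw [zero_sub, neg_c]; ring, by decide⟩, by decide⟩

/-- The canonical homomorphism from the presented group to the concrete model. -/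
def phi : PresentedGroup (relsEvenPos (2*p)) →* Gg p :=
  PresentedGroup.toGroup (lift_rels p)

lemma phi_of (g : Gen) : phi p (PresentedGroup.of g) = genMap p g :=
  PresentedGroup.toGroup.of (lift_rels p)

/-- distinguished elements of the presented group -/
def zP : PresentedGroup (relsEvenPos (2*p)) := PresentedGroup.of Gen.z
def bP : PresentedGroup (relsEvenPos (2*p)) := PresentedGroup.of Gen.s0
def cP : PresentedGroup (relsEvenPos (2*p)) := PresentedGroup.of Gen.s1
def smP : PresentedGroup (relsEvenPos (2*p)) := PresentedGroup.of Gen.sm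
def aP : PresentedGroup (relsEvenPos (2*p)) := smP p * cP p

lemma relP {r : FreeGroup Gen} (hr : r ∈ relsEvenPos (2*p)) :
    PresentedGroup.mk (relsEvenPos (2*p)) r = 1 :=
  (QuotientGroup.eq_one_iff r).mpr (Subgroup.subset_normalClosure hr)

lemma rz2 : zP p ^ 2 = 1 := by
  have := relP p (show (of Gen.z)^2 ∈ relsEvenPos (2*p) by simp [relsEvenPos])
  rw [_root_.map_pow] at this
  exact this

lemma rb2 : bP p ^ 2 = 1 := by
  have := relP p (show (of Gen.s0)^2 ∈ relsEvenPos (2*p) by simp [relsEvenPos])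
  rw [_root_.map_pow] at this
  exact this

lemma rc2 : cP p ^ 2 = 1 := by
  have := relP p (show (of Gen.s1)^2 ∈ relsEvenPos (2*p) by simp [relsEvenPos])
  rw [_root_.map_pow] at this
  exact this

lemma rsm2 : smP p ^ 2 = 1 := by
  have := relP p (show (of Gen.sm)^2 ∈ relsEvenPos (2*p) by simp [relsEvenPos])
  rw [_root_.map_pow] at this
  exact this

lemma r5 : (bP p * cP p) ^ 2 = zP p := by
  have := relP p (show (of Gen.s0 * of Gen.s1)^2 * (of Gen.z)⁻¹ ∈ relsEvenPos (2*p) by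
    simp [relsEvenPos])
  rw [_root_.map_mul, _root_.map_pow, _root_.map_mul, _root_.map_inv] at this
  exact mul_inv_eq_one.mp this

lemma r6 : (bP p * smP p) ^ 2 = zP p := by
  have := relP p (show (of Gen.s0 * of Gen.sm)^2 * (of Gen.z)⁻¹ ∈ relsEvenPos (2*p) by
    simp [relsEvenPos])
  rw [_root_.map_mul, _root_.map_pow, _root_.map_mul, _root_.map_inv] at this
  exact mul_inv_eq_one.mp this

lemma r7 : (cP p * smP p) ^ (2*p) = zP p := by
  have := relP p (show (of Gen.s1 * of Gen.sm)^(2*p) * (of Gen.z)⁻¹ ∈ relsEvenPos (2*p) by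
    simp [relsEvenPos])
  rw [_root_.map_mul, _root_.map_pow, _root_.map_mul, _root_.map_inv] at this
  exact mul_inv_eq_one.mp this

lemma commZB : Commute (zP p) (bP p) := by
  have := relP p (show of Gen.z * of Gen.s0 * (of Gen.z)⁻¹ * (of Gen.s0)⁻¹ ∈
    relsEvenPos (2*p) by simp [relsEvenPos])
  rw [_root_.map_mul, _root_.map_mul, _root_.map_mul, _root_.map_inv, _root_.map_inv] at this
  exact commutatorElement_eq_one_iff_commute.mp this

lemma commZC : Commute (zP p) (cP p) := by
  have := relP p (show of Gen.z * of Gen.s1 * (of Gen.z)⁻¹ * (of Gen.s1)⁻¹ ∈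
    relsEvenPos (2*p) by simp [relsEvenPos])
  rw [_root_.map_mul, _root_.map_mul, _root_.map_mul, _root_.map_inv, _root_.map_inv] at this
  exact commutatorElement_eq_one_iff_commute.mp this

lemma commZSm : Commute (zP p) (smP p) := by
  have := relP p (show of Gen.z * of Gen.sm * (of Gen.z)⁻¹ * (of Gen.sm)⁻¹ ∈
    relsEvenPos (2*p) by simp [relsEvenPos])
  rw [_root_.map_mul, _root_.map_mul, _root_.map_mul, _root_.map_inv, _root_.map_inv] at this
  exact commutatorElement_eq_one_iff_commute.mp this

-- plain multiplication forms
lemma mbb : bP p * bP p = 1 := by rw [← pow_two, rb2]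
lemma mcc : cP p * cP p = 1 := by rw [← pow_two, rc2]
lemma msmsm : smP p * smP p = 1 := by rw [← pow_two, rsm2]
lemma mzz : zP p * zP p = 1 := by rw [← pow_two, rz2]

lemma inv_bP : (bP p)⁻¹ = bP p := inv_eq_of_mul_eq_one_right (mbb p)
lemma inv_cP : (cP p)⁻¹ = cP p := inv_eq_of_mul_eq_one_right (mcc p)
lemma inv_smP : (smP p)⁻¹ = smP p := inv_eq_of_mul_eq_one_right (msmsm p)
lemma inv_zP : (zP p)⁻¹ = zP p := inv_eq_of_mul_eq_one_right (mzz p)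

lemma zzx (x : PresentedGroup (relsEvenPos (2*p))) : zP p * (zP p * x) = x := by
  rw [← mul_assoc, mzz, one_mul]

lemma zsmx (x : PresentedGroup (relsEvenPos (2*p))) :
    zP p * (smP p * x) = smP p * (zP p * x) := by
  rw [← mul_assoc, (commZSm p).eq, mul_assoc]

lemma zcx (x : PresentedGroup (relsEvenPos (2*p))) :
    zP p * (cP p * x) = cP p * (zP p * x) := by
  rw [← mul_assoc, (commZC p).eq, mul_assoc]

lemma cb : cP p * bP p = bP p * (zP p * cP p) := by
  have h5 : bP p * (cP p * (bP p * cP p)) = zP p := by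
    have := r5 p
    rwa [pow_two, mul_assoc] at this
  have e1 := congrArg (fun w => bP p * w) h5
  rw [← mul_assoc, mbb, one_mul] at e1
  have e2 := congrArg (fun w => w * cP p) e1
  rw [mul_assoc, mul_assoc, mcc, mul_one, mul_assoc] at e2
  exact e2

lemma smb : smP p * bP p = bP p * (zP p * smP p) := by
  have h5 : bP p * (smP p * (bP p * smP p)) = zP p := by
    have := r6 p
    rwa [pow_two, mul_assoc] at this
  have e1 := congrArg (fun w => bP p * w) h5
  rw [← mul_assoc, mbb, one_mul] at e1
  have e2 := congrArg (fun w => w * smP p) e1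
  rw [mul_assoc, mul_assoc, msmsm, mul_one, mul_assoc] at e2
  exact e2

lemma cbx (x : PresentedGroup (relsEvenPos (2*p))) :
    cP p * (bP p * x) = bP p * (zP p * (cP p * x)) := by
  rw [← mul_assoc, cb, mul_assoc, mul_assoc]

lemma smbx (x : PresentedGroup (relsEvenPos (2*p))) :
    smP p * (bP p * x) = bP p * (zP p * (smP p * x)) := by
  rw [← mul_assoc, smb, mul_assoc, mul_assoc]

lemma commAB : Commute (aP p) (bP p) := by
  show aP p * bP p = bP p * aP p
  rw [aP, mul_assoc, cb, smbx, zsmx, zzx]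

lemma commZA : Commute (zP p) (aP p) := (commZSm p).mul_right (commZC p)

lemma am : aP p ^ (2*p) = zP p := by
  have hsc : SemiconjBy (smP p) (cP p * smP p) (smP p * cP p) := (mul_assoc _ _ _).symm
  have h := (hsc.pow_right (2*p)).eq
  rw [r7] at h
  -- h : smP p * zP p = (smP p * cP p)^(2p) * smP p
  have h2 : aP p ^ (2*p) * smP p = zP p * smP p := by
    rw [aP, ← h, (commZSm p).eq]
  exact mul_right_cancel h2

lemma a4 : aP p ^ (4*p) = 1 := by
  rw [show 4*p = 2*p*2 from by ring, pow_mul, am, rz2]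

lemma inv_aP : (aP p)⁻¹ = cP p * smP p := by
  rw [aP, mul_inv_rev, inv_cP, inv_smP]

lemma sm_eq : smP p = aP p * cP p := by
  rw [aP, mul_assoc, mcc, mul_one]

lemma ca : cP p * aP p = (aP p)⁻¹ * cP p := by
  rw [inv_aP, aP, mul_assoc, ← mul_assoc]

lemma inv_a_pow [NeZero p] : (aP p)⁻¹ = aP p ^ (4*p-1) := by
  have hp : 1 ≤ p := NeZero.pos p
  refine inv_eq_of_mul_eq_one_right ?_
  rw [← pow_succ', show 4*p-1+1 = 4*p from by omega, a4]

/-- normal form words -/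
def nf (i j k : ℕ) : PresentedGroup (relsEvenPos (2*p)) :=
  aP p ^ i * (bP p ^ j * cP p ^ k)

lemma nf_mul_c (i j : ℕ) : nf p i j 0 * cP p = nf p i j 1 := by
  rw [nf, nf, pow_zero, mul_one, pow_one, mul_assoc]

lemma nf_mul_c1 (i j : ℕ) : nf p i j 1 * cP p = nf p i j 0 := by
  rw [nf, nf, pow_zero, mul_one, pow_one, mul_assoc, mul_assoc, mcc, mul_one]

lemma nf_mul_b (i j : ℕ) : nf p i j 0 * bP p = nf p i (j+1) 0 := by
  rw [nf, nf, pow_zero, mul_one, mul_one, mul_assoc, ← pow_succ]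

lemma nf_mul_b1 (i j : ℕ) : nf p i j 1 * bP p = nf p (i + 2*p) (j+1) 1 := by
  rw [nf, nf, pow_one, mul_assoc, mul_assoc, cb, ← mul_assoc (bP p ^ j),
    ← pow_succ, ← mul_assoc (bP p ^ (j+1)), ← ((commZB p).pow_right (j+1)).eq,
    mul_assoc (zP p), ← mul_assoc (aP p ^ i), ← am, ← pow_add]

lemma nf_mul_z (i j k : ℕ) : nf p i j k * zP p = nf p (i + 2*p) j k := by
  rw [nf, nf, mul_assoc, mul_assoc, ← ((commZC p).pow_right k).eq,
    ← mul_assoc (bP p ^ j), ← ((commZB p).pow_right j).eq, mul_assoc (zP p),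
    ← mul_assoc (aP p ^ i), ← am, ← pow_add]

lemma nf_mul_a (i j : ℕ) : nf p i j 0 * aP p = nf p (i+1) j 0 := by
  rw [nf, nf, pow_zero, mul_one, mul_assoc, ← ((commAB p).pow_right j).eq,
    ← mul_assoc, ← pow_succ]

lemma nf_mul_a1 [NeZero p] (i j : ℕ) : nf p i j 1 * aP p = nf p (i + (4*p-1)) j 1 := by
  rw [nf, nf, pow_one, mul_assoc, mul_assoc, ca, inv_a_pow, ← mul_assoc (bP p ^ j),
    ← ((commAB p).pow_pow (4*p-1) j).eq, mul_assoc (aP p ^ (4*p-1)),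
    ← mul_assoc (aP p ^ i), ← pow_add]

lemma nf_mul_sm (i j : ℕ) : nf p i j 0 * smP p = nf p (i+1) j 1 := by
  rw [sm_eq, ← mul_assoc, nf_mul_a, nf_mul_c]

lemma nf_mul_sm1 [NeZero p] (i j : ℕ) : nf p i j 1 * smP p = nf p (i + (4*p-1)) j 0 := by
  rw [sm_eq, ← mul_assoc, nf_mul_a1, nf_mul_c1]

lemma nf_one : nf p 0 0 0 = 1 := by
  rw [nf, pow_zero, pow_zero, pow_zero, mul_one, mul_one]

lemma nf_step [NeZero p] (g : Gen) {i j k : ℕ} (hk : k ≤ 1) :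
    ∃ i' j' k', k' ≤ 1 ∧ nf p i j k * PresentedGroup.of g = nf p i' j' k' := by
  have hk' : k = 0 ∨ k = 1 := by omega
  cases g
  · -- z
    refine ⟨i + 2*p, j, k, hk, ?_⟩
    exact nf_mul_z p i j k
  · -- s0
    rcases hk' with rfl | rfl
    · exact ⟨i, j+1, 0, by omega, nf_mul_b p i j⟩
    · exact ⟨i + 2*p, j+1, 1, by omega, nf_mul_b1 p i j⟩
  · -- s1
    rcases hk' with rfl | rfl
    · exact ⟨i, j, 1, by omega, nf_mul_c p i j⟩
    · exact ⟨i, j, 0, by omega, nf_mul_c1 p i j⟩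
  · -- sm
    rcases hk' with rfl | rfl
    · exact ⟨i+1, j, 1, by omega, nf_mul_sm p i j⟩
    · exact ⟨i + (4*p-1), j, 0, by omega, nf_mul_sm1 p i j⟩

lemma inv_of (g : Gen) : (PresentedGroup.of g : PresentedGroup (relsEvenPos (2*p)))⁻¹ =
    PresentedGroup.of g := by
  cases g
  · exact inv_zP p
  · exact inv_bP p
  · exact inv_cP p
  · exact inv_smP p

lemma normal_form [NeZero p] (w : PresentedGroup (relsEvenPos (2*p))) :
    ∃ i j k, k ≤ 1 ∧ w = nf p i j k := by
  have hcl : w ∈ Subgroup.closure (Set.range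
      (PresentedGroup.of : Gen → PresentedGroup (relsEvenPos (2*p)))) := by
    rw [PresentedGroup.closure_range_of]
    trivial
  induction hcl using Subgroup.closure_induction_right with
  | one => exact ⟨0, 0, 0, by omega, (nf_one p).symm⟩
  | mul_right x hx y hy ih =>
    obtain ⟨g, rfl⟩ := hy
    obtain ⟨i, j, k, hk, rfl⟩ := ih
    obtain ⟨i', j', k', hk', he⟩ := nf_step p g hk
    exact ⟨i', j', k', hk', he⟩
  | mul_inv_cancel x hx y hy ih =>
    obtain ⟨g, rfl⟩ := hy
    obtain ⟨i, j, k, hk, rfl⟩ := ih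
    rw [inv_of]
    obtain ⟨i', j', k', hk', he⟩ := nf_step p g hk
    exact ⟨i', j', k', hk', he⟩


open Gg in
lemma phi_a : phi p (aP p) = ⟨(1, 0), 0⟩ := by
  rw [aP, smP, cP, _root_.map_mul, phi_of, phi_of,
    show genMap p Gen.sm = ⟨(1,0),1⟩ from rfl, show genMap p Gen.s1 = ⟨(0,0),1⟩ from rfl,
    mk_mul, act_one]
  rw [Gg.mk.injEq]
  constructor
  · show ((1,0) : N p) + sig p (0, 0) = (1, 0)
    rw [sig]
    show ((1,0) : N p) + (mu p 0 - 0, 0) = (1, 0)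
    rw [mu_zero, Prod.mk_add_mk, Prod.mk.injEq]
    exact ⟨by ring, by ring⟩
  · decide

open Gg in
lemma phi_pows [NeZero p] (i j k : ℕ) :
    phi p (nf p i j k) = ⟨(((i : ℕ) : ZMod (4*p)), ((j : ℕ) : ZMod 2)), ((k : ℕ) : ZMod 2)⟩ := by
  rw [nf, _root_.map_mul, _root_.map_mul, _root_.map_pow, _root_.map_pow, _root_.map_pow,
    phi_a, bP, cP, phi_of, phi_of,
    show genMap p Gen.s0 = ⟨(0,1),0⟩ from rfl, show genMap p Gen.s1 = ⟨(0,0),1⟩ from rfl,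
    pow_t0, pow_t0, show (⟨(0,0),1⟩ : Gg p) = ⟨0,1⟩ from rfl, pow_c,
    mk_mul, mk_mul, act_zero, act_zero]
  rw [Gg.mk.injEq]
  constructor
  · show i • ((1 : ZMod (4*p)), (0:ZMod 2)) + (j • ((0 : ZMod (4*p)), (1:ZMod 2)) + 0) = _
    rw [add_zero, Prod.smul_mk, Prod.smul_mk, Prod.mk_add_mk, Prod.mk.injEq]
    constructor
    · rw [smul_zero, add_zero, nsmul_eq_mul, mul_one]
    · rw [smul_zero, zero_add, nsmul_eq_mul, mul_one]
  · show (0 : ZMod 2) + (0 + k • (1 : ZMod 2)) = (k : ZMod 2)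
    rw [zero_add, zero_add, nsmul_eq_mul, mul_one]

lemma phi_inj [NeZero p] : Function.Injective (phi p) := by
  rw [injective_iff_map_eq_one]
  intro w hw
  obtain ⟨i, j, k, hk, rfl⟩ := normal_form p w
  rw [phi_pows, one_eq p, Gg.mk.injEq, Prod.mk.injEq] at hw
  obtain ⟨⟨hi, hj⟩, hkz⟩ := hw
  haveI : NeZero (4*p) := ⟨by have := NeZero.pos p; omega⟩
  obtain ⟨q, hq⟩ := (ZMod.natCast_eq_zero_iff i (4*p)).mp hi
  obtain ⟨r, hr⟩ := (ZMod.natCast_eq_zero_iff j 2).mp hj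
  have hk0 : k = 0 := by
    rcases (show k = 0 ∨ k = 1 from by omega) with rfl | rfl
    · rfl
    · exact absurd hkz (by decide)
  rw [nf, hq, hr, hk0, pow_mul, a4, one_pow, pow_mul, rb2, one_pow, pow_zero, one_mul,
    mul_one]

lemma phi_surj [NeZero p] : Function.Surjective (phi p) := by
  intro g
  obtain ⟨⟨x, y⟩, t⟩ := g
  refine ⟨nf p x.val y.val t.val, ?_⟩
  rw [phi_pows, ZMod.natCast_zmod_val, ZMod.natCast_zmod_val, ZMod.natCast_zmod_val]

/-- conjugacy classes transfer along a `MulEquiv`. -/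
def conjCongr {G H : Type*} [Group G] [Group H] (e : G ≃* H) :
    ConjClasses G ≃ ConjClasses H :=
  Quotient.congr e.toEquiv (by
    intro a b
    show IsConj a b ↔ IsConj (e a) (e b)
    constructor
    · intro h
      exact e.toMonoidHom.map_isConj h
    · intro h
      have := e.symm.toMonoidHom.map_isConj h
      simpa using this)

end WposAux

/-- For even `m = 2p ≥ 2`, the positive double covering `Ŵ⁺` of `ℤ₂ × D_{2m}`
has exactly `2m + 6` conjugacy classes. -/
theorem WposEven_conjClasses (m p : ℕ) (hp : 1 ≤ p) (hm : m = 2 * p) :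
    Nat.card (ConjClasses (PresentedGroup (relsEvenPos m))) = 2 * m + 6 := by
  subst hm
  haveI : NeZero p := ⟨by omega⟩
  have e : PresentedGroup (relsEvenPos (2*p)) ≃* WposAux.Gg p :=
    MulEquiv.ofBijective (WposAux.phi p) ⟨WposAux.phi_inj p, WposAux.phi_surj p⟩
  rw [Nat.card_congr (WposAux.conjCongr e), WposAux.Gg.card_conjClasses]
  ring
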